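/- As α tends to 0 from the right, the exponentiated PML bound B_thm(α) := max_{I ⊆ Fin m} exp(−(min_j c_j^I)/b) / (α ∑_j exp(−c_j^I/b) + (1 − kα) exp(−(max_j c_j^I)/b)) tends to exp(ε_DP), where ε_DP := (max_{j1,j2 ∈ Fin k} ∑_l |w_{l,j1} − w_{l,j2}|)/b; i.e., the context-aware bound converges to the standard differential-privacy guarantee as the prior assumption vanishes. -/

import Mathlib

open Finset Real Filter

noncomputable section

/-- Signed column sum `c_j^I := ∑_{l ∈ I} w_{l,j} − ∑_{l ∉ I} w_{l,j}`. -/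
def signedColSum {m k : ℕ} (W : Fin m → Fin k → ℝ) (I : Finset (Fin m)) (j : Fin k) : ℝ :=
  (∑ l ∈ I, W l j) - ∑ l ∈ Iᶜ, W l j

/-- The exponentiated PML bound `B_thm(α)`. -/
def Bthm {m k : ℕ} (W : Fin m → Fin k → ℝ) (b α : ℝ) : ℝ :=
  ⨆ I : Finset (Fin m),
    Real.exp (-(⨅ j, signedColSum W I j) / b) /
      (α * (∑ j, Real.exp (-(signedColSum W I j) / b)) +
        (1 - (k : ℝ) * α) * Real.exp (-(⨆ j, signedColSum W I j) / b))

/-- The DP parameter of the Laplace mechanism with scale `b` on workload `W`. -/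
def εDP {m k : ℕ} (W : Fin m → Fin k → ℝ) (b : ℝ) : ℝ :=
  (⨆ j1 : Fin k, ⨆ j2 : Fin k, ∑ l, |W l j1 - W l j2|) / b

lemma signedColSum_sub {m k : ℕ} (W : Fin m → Fin k → ℝ) (I : Finset (Fin m))
    (j1 j2 : Fin k) :
    signedColSum W I j1 - signedColSum W I j2 =
      (∑ l ∈ I, (W l j1 - W l j2)) - ∑ l ∈ Iᶜ, (W l j1 - W l j2) := by
  simp only [signedColSum, Finset.sum_sub_distrib]
  ring

/-- As `α → 0⁺` (within `(0, 1/k]`), the context-aware bound `B_thm(α)` converges to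
the standard DP guarantee `exp(ε_DP)`. -/
theorem Bthm_tendsto_exp_epsDP
    (k m : ℕ) (hk : 0 < k) (hm : 0 < m)
    (b : ℝ) (hb : 0 < b) (W : Fin m → Fin k → ℝ) :
    Tendsto (fun α : ℝ => Bthm W b α)
      (nhdsWithin 0 (Set.Ioc (0 : ℝ) (1 / (k : ℝ))))
      (nhds (Real.exp (εDP W b))) := by
  haveI : NeZero k := ⟨hk.ne'⟩
  set c := signedColSum W with hc
  -- rewrite Bthm via sup'
  have hBthm : ∀ α : ℝ, Bthm W b α = Finset.univ.sup' Finset.univ_nonempty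
      (fun I : Finset (Fin m) => Real.exp (-(⨅ j, c I j) / b) /
        (α * (∑ j, Real.exp (-(c I j) / b)) +
          (1 - (k : ℝ) * α) * Real.exp (-(⨆ j, c I j) / b))) := by
    intro α
    rw [Bthm, ← Finset.sup'_univ_eq_ciSup]
  -- the limit function on each I
  set g : Finset (Fin m) → ℝ := fun I =>
    Real.exp ((Finset.univ.sup' Finset.univ_nonempty (c I)
      - Finset.univ.inf' Finset.univ_nonempty (c I)) / b) with hg
  have hgI : ∀ I : Finset (Fin m),
      Real.exp (-(⨅ j, c I j) / b) / Real.exp (-(⨆ j, c I j) / b) = g I := by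
    intro I
    rw [hg]
    simp only
    rw [← Real.exp_sub, Finset.sup'_univ_eq_ciSup, Finset.inf'_univ_eq_ciInf]
    congr 1
    ring
  -- pointwise tendsto
  have htend : ∀ I ∈ (Finset.univ : Finset (Finset (Fin m))),
      Tendsto (fun α : ℝ => Real.exp (-(⨅ j, c I j) / b) /
        (α * (∑ j, Real.exp (-(c I j) / b)) +
          (1 - (k : ℝ) * α) * Real.exp (-(⨆ j, c I j) / b)))
      (nhdsWithin 0 (Set.Ioc (0 : ℝ) (1 / (k : ℝ)))) (nhds (g I)) := by
    intro I _
    have hcont : Continuous fun α : ℝ =>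
        α * (∑ j, Real.exp (-(c I j) / b)) +
          (1 - (k : ℝ) * α) * Real.exp (-(⨆ j, c I j) / b) := by
      continuity
    have hden : Tendsto (fun α : ℝ =>
        α * (∑ j, Real.exp (-(c I j) / b)) +
          (1 - (k : ℝ) * α) * Real.exp (-(⨆ j, c I j) / b))
        (nhdsWithin 0 (Set.Ioc (0 : ℝ) (1 / (k : ℝ))))
        (nhds (Real.exp (-(⨆ j, c I j) / b))) := by
      have h0 := (hcont.tendsto 0).mono_left
        (nhdsWithin_le_nhds (s := Set.Ioc (0 : ℝ) (1 / (k : ℝ))))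
      simpa using h0
    have := Tendsto.div (tendsto_const_nhds
        (x := Real.exp (-(⨅ j, c I j) / b))
        (f := nhdsWithin (0:ℝ) (Set.Ioc (0 : ℝ) (1 / (k : ℝ))))) hden
        (Real.exp_pos _).ne'
    rw [hgI I] at this
    exact this
  have hsup := Filter.Tendsto.finset_sup'_nhds_apply
    (Finset.univ_nonempty (α := Finset (Fin m))) htend
  have hfun : (fun α : ℝ => Bthm W b α) = fun α : ℝ =>
      Finset.univ.sup' Finset.univ_nonempty
      (fun I : Finset (Fin m) => Real.exp (-(⨅ j, c I j) / b) /
        (α * (∑ j, Real.exp (-(c I j) / b)) +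
          (1 - (k : ℝ) * α) * Real.exp (-(⨆ j, c I j) / b))) := funext hBthm
  rw [hfun]
  -- it remains to identify the limit
  have hlim : Finset.univ.sup' Finset.univ_nonempty g = Real.exp (εDP W b) := by
    -- push exp through sup'
    have hmap : Finset.univ.sup' Finset.univ_nonempty g =
        Real.exp ((Finset.univ.sup' Finset.univ_nonempty
          (fun I : Finset (Fin m) => (Finset.univ.sup' Finset.univ_nonempty (c I)
            - Finset.univ.inf' Finset.univ_nonempty (c I)))) / b) := by
      have hmono : Monotone (fun x : ℝ => Real.exp (x / b)) :=
        fun x y h => Real.exp_le_exp.mpr (by gcongr)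
      rw [hg, Finset.comp_sup'_eq_sup'_comp _ (fun x : ℝ => Real.exp (x / b))
        (fun x y => by simpa using hmono.map_max (a := x) (b := y))]
      rfl
    rw [hmap, εDP]
    have hXY : (Finset.univ.sup' Finset.univ_nonempty
        (fun I : Finset (Fin m) => Finset.univ.sup' Finset.univ_nonempty (c I)
          - Finset.univ.inf' Finset.univ_nonempty (c I)))
        = ⨆ j1 : Fin k, ⨆ j2 : Fin k, ∑ l, |W l j1 - W l j2| := by
      rw [← Finset.sup'_univ_eq_ciSup]
      have hinner : ∀ j1 : Fin k, (⨆ j2 : Fin k, ∑ l, |W l j1 - W l j2|) =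
          Finset.univ.sup' Finset.univ_nonempty (fun j2 => ∑ l, |W l j1 - W l j2|) :=
        fun j1 => (Finset.sup'_univ_eq_ciSup _).symm
      rw [show (fun j1 : Fin k => ⨆ j2 : Fin k, ∑ l, |W l j1 - W l j2|) =
          (fun j1 => Finset.univ.sup' Finset.univ_nonempty
            (fun j2 => ∑ l, |W l j1 - W l j2|)) from funext hinner]
      apply le_antisymm
      · apply Finset.sup'_le
        intro I _
        obtain ⟨j1, -, hj1⟩ := Finset.exists_mem_eq_sup' Finset.univ_nonempty (c I)
        obtain ⟨j2, -, hj2⟩ := Finset.exists_mem_eq_inf' Finset.univ_nonempty (c I)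
        rw [hj1, hj2]
        have key : c I j1 - c I j2 ≤ ∑ l, |W l j1 - W l j2| := by
          rw [hc, signedColSum_sub]
          have h1 : ∑ l ∈ I, (W l j1 - W l j2) ≤ ∑ l ∈ I, |W l j1 - W l j2| :=
            Finset.sum_le_sum fun l _ => le_abs_self _
          have h2 : -∑ l ∈ Iᶜ, (W l j1 - W l j2) ≤ ∑ l ∈ Iᶜ, |W l j1 - W l j2| := by
            rw [← Finset.sum_neg_distrib]
            exact Finset.sum_le_sum fun l _ => neg_le_abs _
          have h3 : ∑ l ∈ I, |W l j1 - W l j2| + ∑ l ∈ Iᶜ, |W l j1 - W l j2|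
              = ∑ l, |W l j1 - W l j2| := Finset.sum_add_sum_compl I _
          linarith
        calc c I j1 - c I j2 ≤ ∑ l, |W l j1 - W l j2| := key
          _ ≤ _ := by
              apply Finset.le_sup' (b := j1)
                (f := fun j1 => Finset.univ.sup' Finset.univ_nonempty
                  (fun j2 => ∑ l, |W l j1 - W l j2|)) (Finset.mem_univ j1) |>.trans'
              exact Finset.le_sup' (fun j2 => ∑ l, |W l j1 - W l j2|) (Finset.mem_univ j2)
      · apply Finset.sup'_le
        intro j1 _
        apply Finset.sup'_le
        intro j2 _
        classical
        set I : Finset (Fin m) := Finset.univ.filter (fun l => 0 ≤ W l j1 - W l j2) with hI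
        have heq : ∑ l, |W l j1 - W l j2| = c I j1 - c I j2 := by
          rw [hc, signedColSum_sub, ← Finset.sum_add_sum_compl I (fun l => |W l j1 - W l j2|)]
          have e1 : ∑ l ∈ I, |W l j1 - W l j2| = ∑ l ∈ I, (W l j1 - W l j2) := by
            apply Finset.sum_congr rfl
            intro l hl
            rw [hI, Finset.mem_filter] at hl
            exact abs_of_nonneg hl.2
          have e2 : ∑ l ∈ Iᶜ, |W l j1 - W l j2| = -∑ l ∈ Iᶜ, (W l j1 - W l j2) := by
            rw [← Finset.sum_neg_distrib]
            apply Finset.sum_congr rfl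
            intro l hl
            rw [Finset.mem_compl, hI, Finset.mem_filter] at hl
            push_neg at hl
            exact abs_of_neg (hl (Finset.mem_univ l))
          rw [e1, e2]
          ring
        rw [heq]
        have hle : c I j1 - c I j2 ≤ Finset.univ.sup' Finset.univ_nonempty (c I)
            - Finset.univ.inf' Finset.univ_nonempty (c I) := by
          have := Finset.le_sup' (c I) (Finset.mem_univ j1)
          have := Finset.inf'_le (c I) (Finset.mem_univ j2)
          gcongr <;> first
            | exact Finset.le_sup' (c I) (Finset.mem_univ j1)
            | exact Finset.inf'_le (c I) (Finset.mem_univ j2)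
        exact hle.trans (Finset.le_sup'
          (fun I : Finset (Fin m) => Finset.univ.sup' Finset.univ_nonempty (c I)
            - Finset.univ.inf' Finset.univ_nonempty (c I)) (Finset.mem_univ I))
    rw [hXY]
  rw [← hlim]
  exact hsup

end
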